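/- Let g be a non-negative submodular function on a finite ground set N with |N| = n, let ℓ be a linear function on N, let β ∈ (0, 1], and let Δ ≥ 0. Define h(T) = E[g(T(β))] + β(1+β)·ℓ(T) for T ⊆ N. Suppose T ⊆ N satisfies h(T) ≥ h(T ∪ {u}) − 3Δ/2 for every u ∈ N \ T, and h(T) ≥ h(T \ {u}) − 3Δ/2 for every u ∈ T. Then for every set S ⊆ N: E[g(T(β))] + β·ℓ(T) ≥ (β(1−β)/(1+β))·g(S) + β·ℓ(S) − 3nΔ/2. -/

import Mathlib

/-- `expSample F β T` is the expectation `E[F (T(β))]`, where `T(β)` is a random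
subset of `T` containing each element of `T` independently with probability `β`:
`E[F (T(β))] = ∑_{A ⊆ T} β^|A| (1−β)^{|T|−|A|} F A`. -/
noncomputable def expSample {α : Type*} [DecidableEq α]
    (F : Finset α → ℝ) (β : ℝ) (T : Finset α) : ℝ :=
  ∑ A ∈ T.powerset, β ^ A.card * (1 - β) ^ (T.card - A.card) * F A

section Helpers

variable {α : Type*} [DecidableEq α]


lemma expSample_congr {F F' : Finset α → ℝ} {β : ℝ} {T : Finset α}
    (h : ∀ A ∈ T.powerset, F A = F' A) :
    expSample F β T = expSample F' β T := by
  unfold expSample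
  exact Finset.sum_congr rfl (fun A hA => by rw [h A hA])

lemma expSample_empty (F : Finset α → ℝ) (β : ℝ) : expSample F β ∅ = F ∅ := by
  simp [expSample]

lemma expSample_insert (F : Finset α → ℝ) (β : ℝ) {u : α} {T : Finset α} (hu : u ∉ T) :
    expSample F β (insert u T) =
      β * expSample (fun A => F (insert u A)) β T + (1 - β) * expSample F β T := by
  unfold expSample
  rw [Finset.powerset_insert, Finset.sum_union]
  · rw [Finset.sum_image (fun A hA B hB hAB => by
      have hA' : u ∉ A := fun h => hu (Finset.mem_powerset.mp hA h)
      have hB' : u ∉ B := fun h => hu (Finset.mem_powerset.mp hB h)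
      rw [← Finset.erase_insert hA', hAB, Finset.erase_insert hB'])]
    rw [add_comm, Finset.mul_sum, Finset.mul_sum]
    congr 1
    · exact Finset.sum_congr rfl (fun A hA => by
        have hA' : u ∉ A := fun h => hu (Finset.mem_powerset.mp hA h)
        rw [Finset.card_insert_of_notMem hu, Finset.card_insert_of_notMem hA',
          Nat.succ_sub_succ, pow_succ]
        ring)
    · exact Finset.sum_congr rfl (fun A hA => by
        have hA' : A ⊆ T := Finset.mem_powerset.mp hA
        have h1 : T.card + 1 - A.card = (T.card - A.card) + 1 :=
          Nat.succ_sub (Finset.card_le_card hA')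
        rw [Finset.card_insert_of_notMem hu, h1, pow_succ]
        ring)
  · rw [Finset.disjoint_right]
    intro A hA hA'
    obtain ⟨B, hB, rfl⟩ := Finset.mem_image.mp hA
    exact hu (Finset.mem_powerset.mp hA' (Finset.mem_insert_self u B))


lemma expSample_mono {F F' : Finset α → ℝ} {β : ℝ} {T : Finset α}
    (hβ0 : 0 ≤ β) (hβ1 : β ≤ 1) (h : ∀ A ∈ T.powerset, F A ≤ F' A) :
    expSample F β T ≤ expSample F' β T := by
  apply Finset.sum_le_sum
  intro A hA
  have h1 : (0:ℝ) ≤ 1 - β := by linarith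
  have : (0:ℝ) ≤ β ^ A.card * (1 - β) ^ (T.card - A.card) := by positivity
  exact mul_le_mul_of_nonneg_left (h A hA) this

lemma expSample_add (F F' : Finset α → ℝ) (β : ℝ) (T : Finset α) :
    expSample (fun A => F A + F' A) β T = expSample F β T + expSample F' β T := by
  simp [expSample, mul_add, Finset.sum_add_distrib]

lemma expSample_smul (c : ℝ) (F : Finset α → ℝ) (β : ℝ) (T : Finset α) :
    expSample (fun A => c * F A) β T = c * expSample F β T := by
  simp only [expSample, Finset.mul_sum]
  exact Finset.sum_congr rfl (fun A hA => by ring)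

lemma expSample_sub (F F' : Finset α → ℝ) (β : ℝ) (T : Finset α) :
    expSample (fun A => F A - F' A) β T = expSample F β T - expSample F' β T := by
  simp [expSample, mul_sub, Finset.sum_sub_distrib]

lemma expSample_inter (F : Finset α → ℝ) (β : ℝ) (S : Finset α) (U : Finset α) :
    expSample (fun A => F (A ∩ S)) β U = expSample F β (U ∩ S) := by
  induction U using Finset.induction_on generalizing F with
  | empty => simp [expSample_empty]
  | insert _ _ hu =>
    rename_i u U ih
    rw [expSample_insert _ _ hu]
    by_cases huS : u ∈ S
    · have h1 : expSample (fun A => F (insert u A ∩ S)) β U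
          = expSample (fun A => F (insert u (A ∩ S))) β U :=
        expSample_congr (fun A hA => by
          rw [Finset.insert_inter_of_mem huS])
      rw [h1, ih (fun C => F (insert u C)), ih F,
        Finset.insert_inter_of_mem huS,
        expSample_insert F β (by simp [hu] : u ∉ U ∩ S)]
    · have h1 : expSample (fun A => F (insert u A ∩ S)) β U
          = expSample (fun A => F (A ∩ S)) β U :=
        expSample_congr (fun A hA => by rw [Finset.insert_inter_of_notMem huS])
      rw [h1, ih F, Finset.insert_inter_of_notMem huS]
      ring

lemma expSample_union (F : Finset α → ℝ) (β : ℝ) {Q R : Finset α} (hQR : Disjoint Q R) :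
    expSample F β (Q ∪ R) =
      expSample (fun B => expSample (fun A => F (B ∪ A)) β R) β Q := by
  induction Q using Finset.induction_on generalizing F with
  | empty =>
    rw [Finset.empty_union, expSample_empty]
    exact (expSample_congr (fun A hA => by rw [Finset.empty_union])).symm
  | insert _ _ hu =>
    rename_i u Q ih
    have huR : u ∉ R := Finset.disjoint_left.mp hQR (Finset.mem_insert_self u Q)
    have hQR' : Disjoint Q R := Finset.disjoint_of_subset_left (Finset.subset_insert u Q) hQR
    have huQR : u ∉ Q ∪ R := by simp [hu, huR]
    rw [Finset.insert_union, expSample_insert _ _ huQR, ih _ hQR', ih F hQR',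
      expSample_insert _ _ hu]
    congr 1
    congr 1
    exact expSample_congr (fun B hB =>
      expSample_congr (fun A hA => by rw [Finset.insert_union]))

/-- concavity along nonnegative directions, discrete form -/
lemma det_concave (g : Finset α → ℝ)
    (hg_sub : ∀ S T : Finset α, g (S ∪ T) + g (S ∩ T) ≤ g S + g T)
    {β : ℝ} (hβ0 : 0 ≤ β) (hβ1 : β ≤ 1) (X : Finset α) (R : Finset α) :
    (1 - β) * g X + β * g (X ∪ R) ≤ expSample (fun A => g (X ∪ A)) β R := by
  induction R using Finset.induction_on generalizing X with
  | empty =>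
    rw [expSample_empty]
    have : X ∪ (∅ : Finset α) = X := Finset.union_empty X
    rw [this]; linarith
  | insert _ _ hu =>
    rename_i u R ih
    rw [expSample_insert _ _ hu]
    have h1 : expSample (fun A => g (X ∪ insert u A)) β R
        = expSample (fun A => g (insert u X ∪ A)) β R :=
      expSample_congr (fun A hA => by
        congr 1; ext v; simp [Finset.mem_insert, Finset.mem_union])
    rw [h1]
    have i1 := ih (insert u X)
    have i2 := ih X
    have hsub := hg_sub (insert u X) (X ∪ R)
    have e1 : insert u X ∪ (X ∪ R) = X ∪ insert u R := by
      ext v; simp [Finset.mem_insert, Finset.mem_union]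
    have e2 : insert u X ∩ (X ∪ R) = X := by
      ext v
      simp only [Finset.mem_inter, Finset.mem_insert, Finset.mem_union]
      constructor
      · rintro ⟨h1 | h1, h2 | h2⟩ <;> first | assumption | (subst h1; exact absurd h2 hu)
      · intro hv; exact ⟨Or.inr hv, Or.inl hv⟩
    have e3 : insert u X ∪ R = X ∪ insert u R := by
      ext v; simp [Finset.mem_insert, Finset.mem_union]
    rw [e1, e2] at hsub
    rw [e3] at i1
    nlinarith [mul_nonneg hβ0 (by linarith : (0:ℝ) ≤ 1 - β)]


lemma add_group (G : Finset α → ℝ)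
    (hsub : ∀ A B : Finset α, G (A ∪ B) + G (A ∩ B) ≤ G A + G B)
    (T : Finset α) (D : Finset α) (hD : Disjoint D T) :
    G (T ∪ D) - G T ≤ ∑ u ∈ D, (G (T ∪ {u}) - G T) := by
  induction D using Finset.induction_on with
  | empty => simp
  | insert _ _ hu =>
    rename_i u D ih
    have huT : u ∉ T := Finset.disjoint_left.mp hD (Finset.mem_insert_self u D)
    have hD' : Disjoint D T := Finset.disjoint_of_subset_left (Finset.subset_insert u D) hD
    rw [Finset.sum_insert hu]
    have hsb := hsub (T ∪ {u}) (T ∪ D)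
    have e1 : (T ∪ {u}) ∪ (T ∪ D) = T ∪ insert u D := by
      ext v; simp [Finset.mem_insert, Finset.mem_union]
    have e2 : (T ∪ {u}) ∩ (T ∪ D) = T := by
      ext v
      simp only [Finset.mem_inter, Finset.mem_union, Finset.mem_singleton]
      constructor
      · rintro ⟨h1 | h1, h2 | h2⟩ <;> first | assumption | (subst h1; exact absurd h2 hu)
      · intro hv; exact ⟨Or.inl hv, Or.inl hv⟩
    rw [e1, e2] at hsb
    linarith [ih hD']

lemma rem_group (G : Finset α → ℝ)
    (hsub : ∀ A B : Finset α, G (A ∪ B) + G (A ∩ B) ≤ G A + G B)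
    (T : Finset α) (D : Finset α) (hD : D ⊆ T) :
    ∑ u ∈ D, (G T - G (T \ {u})) ≤ G T - G (T \ D) := by
  induction D using Finset.induction_on with
  | empty => simp
  | insert _ _ hu =>
    rename_i u D ih
    have hD' : D ⊆ T := (Finset.subset_insert u D).trans hD
    rw [Finset.sum_insert hu]
    have hsb := hsub (T \ {u}) (T \ D)
    have e1 : (T \ {u}) ∪ (T \ D) = T := by
      ext v
      simp only [Finset.mem_union, Finset.mem_sdiff, Finset.mem_singleton]
      constructor
      · rintro (⟨h1, _⟩ | ⟨h1, _⟩) <;> exact h1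
      · intro hv
        by_cases hvD : v ∈ D
        · exact Or.inl ⟨hv, fun hvu => hu (hvu ▸ hvD)⟩
        · exact Or.inr ⟨hv, hvD⟩
    have e2 : (T \ {u}) ∩ (T \ D) = T \ insert u D := by
      ext v; simp [Finset.mem_insert]; tauto
    rw [e1, e2] at hsb
    linarith [ih hD']

lemma expSample_zero (β : ℝ) (T : Finset α) : expSample (fun _ => (0:ℝ)) β T = 0 := by
  simp [expSample]

lemma expSample_nonneg {F : Finset α → ℝ} {β : ℝ} {T : Finset α}
    (hβ0 : 0 ≤ β) (hβ1 : β ≤ 1) (h : ∀ A ∈ T.powerset, 0 ≤ F A) :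
    0 ≤ expSample F β T := by
  have := expSample_mono (F := fun _ => (0:ℝ)) (F' := F) (β := β) (T := T) hβ0 hβ1 h
  rwa [expSample_zero] at this

lemma expSample_submod (g : Finset α → ℝ)
    (hg_sub : ∀ S T : Finset α, g (S ∪ T) + g (S ∩ T) ≤ g S + g T)
    {β : ℝ} (hβ0 : 0 ≤ β) (hβ1 : β ≤ 1) (S T : Finset α) :
    expSample g β (S ∪ T) + expSample g β (S ∩ T) ≤ expSample g β S + expSample g β T := by
  have eS : expSample g β S = expSample (fun A => g (A ∩ S)) β (S ∪ T) := by
    rw [expSample_inter, Finset.union_inter_cancel_left]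
  have eT : expSample g β T = expSample (fun A => g (A ∩ T)) β (S ∪ T) := by
    rw [expSample_inter, Finset.union_inter_cancel_right]
  have eI : expSample g β (S ∩ T) = expSample (fun A => g (A ∩ (S ∩ T))) β (S ∪ T) := by
    rw [expSample_inter]
    congr 1
    ext v; simp [Finset.mem_inter, Finset.mem_union]; tauto
  rw [eS, eT, eI, ← expSample_add, ← expSample_add]
  apply expSample_mono hβ0 hβ1
  intro A hA
  have hAU : A ⊆ S ∪ T := Finset.mem_powerset.mp hA
  have key := hg_sub (A ∩ S) (A ∩ T)
  have e1 : (A ∩ S) ∪ (A ∩ T) = A := by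
    rw [← Finset.inter_union_distrib_left]
    exact Finset.inter_eq_left.mpr hAU
  have e2 : (A ∩ S) ∩ (A ∩ T) = A ∩ (S ∩ T) := by
    ext v; simp [Finset.mem_inter]; tauto
  rw [e1, e2] at key
  linarith

end Helpers

/-- **Approximate local maxima of the auxiliary function are good.**
Let `g` be a non-negative submodular function on a finite ground set of size `n`,
`ℓ` a linear function (with weights `a`), `β ∈ (0, 1]` and `Δ ≥ 0`.  Define
`h T = E[g (T(β))] + β(1+β)·ℓ T`.  If `T` satisfies
`h T ≥ h (T ∪ {u}) − 3Δ/2` for every `u ∉ T` and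
`h T ≥ h (T \ {u}) − 3Δ/2` for every `u ∈ T`, then for every `S`:
`E[g (T(β))] + β·ℓ T ≥ (β(1−β)/(1+β))·g S + β·ℓ S − 3nΔ/2`. -/
theorem approx_local_max_guarantee
    {α : Type*} [Fintype α] [DecidableEq α]
    (g : Finset α → ℝ)
    (hg_sub : ∀ S T : Finset α, g (S ∪ T) + g (S ∩ T) ≤ g S + g T)
    (hg_nonneg : ∀ S : Finset α, 0 ≤ g S)
    (a : α → ℝ) (ℓ : Finset α → ℝ) (hℓ : ∀ S : Finset α, ℓ S = ∑ v ∈ S, a v)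
    (β Δ : ℝ) (hβ0 : 0 < β) (hβ1 : β ≤ 1) (hΔ : 0 ≤ Δ)
    (h : Finset α → ℝ)
    (hh : ∀ T : Finset α, h T = expSample g β T + β * (1 + β) * ℓ T)
    (T : Finset α)
    (hT_add : ∀ u : α, u ∉ T → h T ≥ h (T ∪ {u}) - 3 * Δ / 2)
    (hT_rem : ∀ u : α, u ∈ T → h T ≥ h (T \ {u}) - 3 * Δ / 2)
    (S : Finset α) :
    expSample g β T + β * ℓ T ≥
      β * (1 - β) / (1 + β) * g S + β * ℓ S - 3 * (Fintype.card α : ℝ) * Δ / 2 := by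
  set G : Finset α → ℝ := fun U => expSample g β U with hG
  have hβ0' : (0:ℝ) ≤ β := hβ0.le
  have hGsub : ∀ A B : Finset α, G (A ∪ B) + G (A ∩ B) ≤ G A + G B :=
    fun A B => expSample_submod g hg_sub hβ0' hβ1 A B
  have hGnonneg : ∀ U : Finset α, 0 ≤ G U :=
    fun U => expSample_nonneg hβ0' hβ1 (fun A _ => hg_nonneg A)
  -- ℓ decompositions
  have lsplit1 : ∑ u ∈ S \ T, a u = ℓ S - ℓ (S ∩ T) := by
    have h1 : ∑ u ∈ S \ (S ∩ T), a u + ∑ u ∈ S ∩ T, a u = ∑ u ∈ S, a u :=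
      Finset.sum_sdiff (Finset.inter_subset_left)
    rw [Finset.sdiff_inter_self_left] at h1
    rw [hℓ S, hℓ (S ∩ T)]; linarith
  have lsplit2 : ∑ u ∈ T \ S, a u = ℓ T - ℓ (S ∩ T) := by
    have h1 : ∑ u ∈ T \ (T ∩ S), a u + ∑ u ∈ T ∩ S, a u = ∑ u ∈ T, a u :=
      Finset.sum_sdiff (Finset.inter_subset_left)
    rw [Finset.sdiff_inter_self_left, Finset.inter_comm T S] at h1
    rw [hℓ T, hℓ (S ∩ T)]; linarith
  -- per-element local optimality bounds
  have bnd1 : ∀ u ∈ S \ T, G (T ∪ {u}) - G T ≤ 3 * Δ / 2 - β * (1 + β) * a u := by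
    intro u hu
    have huT : u ∉ T := (Finset.mem_sdiff.mp hu).2
    have hl : ℓ (T ∪ {u}) = ℓ T + a u := by
      have e : T ∪ {u} = insert u T := by
        ext v; simp [Finset.mem_union, Finset.mem_insert, or_comm]
      rw [hℓ, hℓ, e, Finset.sum_insert huT]; ring
    have hloc := hT_add u huT
    rw [hh T, hh (T ∪ {u}), hl] at hloc
    have expand : β * (1 + β) * (ℓ T + a u) = β * (1 + β) * ℓ T + β * (1 + β) * a u := by ring
    rw [expand] at hloc
    simp only [hG]
    linarith
  have bnd2 : ∀ u ∈ T \ S, -(3 * Δ / 2) - β * (1 + β) * a u ≤ G T - G (T \ {u}) := by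
    intro u hu
    have huT : u ∈ T := (Finset.mem_sdiff.mp hu).1
    have hl : ℓ (T \ {u}) = ℓ T - a u := by
      rw [hℓ, hℓ, Finset.sdiff_singleton_eq_erase, Finset.sum_erase_eq_sub huT]
    have hloc := hT_rem u huT
    rw [hh T, hh (T \ {u}), hl] at hloc
    have expand : β * (1 + β) * (ℓ T - a u) = β * (1 + β) * ℓ T - β * (1 + β) * a u := by ring
    rw [expand] at hloc
    simp only [hG]
    linarith
  -- P1
  have P1 : G (S ∪ T) - G T ≤
      (↑(S \ T).card) * (3 * Δ / 2) - β * (1 + β) * (ℓ S - ℓ (S ∩ T)) := by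
    have hdisj : Disjoint (S \ T) T := Finset.sdiff_disjoint
    have h1 := add_group G hGsub T (S \ T) hdisj
    have e1 : T ∪ (S \ T) = S ∪ T := by
      rw [Finset.union_comm, Finset.sdiff_union_self_eq_union]
    rw [e1] at h1
    have h2 : ∑ u ∈ S \ T, (G (T ∪ {u}) - G T) ≤
        ∑ u ∈ S \ T, (3 * Δ / 2 - β * (1 + β) * a u) := Finset.sum_le_sum bnd1
    have h3 : ∑ u ∈ S \ T, (3 * Δ / 2 - β * (1 + β) * a u)
        = (↑(S \ T).card) * (3 * Δ / 2) - β * (1 + β) * (ℓ S - ℓ (S ∩ T)) := by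
      rw [Finset.sum_sub_distrib, Finset.sum_const, nsmul_eq_mul, ← Finset.mul_sum, lsplit1]
    rw [h3] at h2
    linarith [h1.trans h2]
  -- P2
  have P2 : G (S ∩ T) - G T ≤
      (↑(T \ S).card) * (3 * Δ / 2) + β * (1 + β) * (ℓ T - ℓ (S ∩ T)) := by
    have h1 := rem_group G hGsub T (T \ S) (Finset.sdiff_subset)
    have e1 : T \ (T \ S) = S ∩ T := by
      rw [Finset.sdiff_sdiff_self_left, Finset.inter_comm]
    rw [e1] at h1
    have h2 : ∑ u ∈ T \ S, (-(3 * Δ / 2) - β * (1 + β) * a u) ≤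
        ∑ u ∈ T \ S, (G T - G (T \ {u})) := Finset.sum_le_sum bnd2
    have h3 : ∑ u ∈ T \ S, (-(3 * Δ / 2) - β * (1 + β) * a u)
        = -((↑(T \ S).card) * (3 * Δ / 2)) - β * (1 + β) * (ℓ T - ℓ (S ∩ T)) := by
      rw [Finset.sum_sub_distrib, Finset.sum_const, nsmul_eq_mul, ← Finset.mul_sum, lsplit2]
      ring
    rw [h3] at h2
    linarith [h2.trans h1]
  -- P3 : key concavity bound
  have P3 : (1 - β) * G T + β * (1 - β) * g S ≤ G (S ∪ T) + G (S ∩ T) := by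
    have hdisj : Disjoint (T \ S) S := Finset.sdiff_disjoint
    have e0 : (T \ S) ∪ S = S ∪ T := by
      rw [Finset.sdiff_union_self_eq_union, Finset.union_comm]
    have hsplit : G (S ∪ T) =
        expSample (fun B => expSample (fun A => g (B ∪ A)) β S) β (T \ S) := by
      rw [hG]; rw [← e0]; exact expSample_union g β hdisj
    have hinner : expSample (fun B => (1 - β) * g B + β * g (B ∪ S)) β (T \ S) ≤
        expSample (fun B => expSample (fun A => g (B ∪ A)) β S) β (T \ S) := by
      apply expSample_mono hβ0' hβ1
      intro B _
      exact det_concave g hg_sub hβ0' hβ1 B S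
    have hsum : expSample (fun B => (1 - β) * g B + β * g (B ∪ S)) β (T \ S)
        = (1 - β) * G (T \ S) + β * expSample (fun B => g (B ∪ S)) β (T \ S) := by
      rw [expSample_add (fun B => (1 - β) * g B) (fun B => β * g (B ∪ S)),
        expSample_smul, expSample_smul]
    have hsecond : (1 - β) * g S ≤ expSample (fun B => g (B ∪ S)) β (T \ S) := by
      have hd := det_concave g hg_sub hβ0' hβ1 S (T \ S)
      have hc : expSample (fun A => g (S ∪ A)) β (T \ S)
          = expSample (fun B => g (B ∪ S)) β (T \ S) :=
        expSample_congr (fun A _ => by rw [Finset.union_comm])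
      rw [hc] at hd
      nlinarith [hg_nonneg (S ∪ (T \ S))]
    have hTsplit : G T ≤ G (T \ S) + G (S ∩ T) := by
      have hs := hGsub (T \ S) (S ∩ T)
      have e1 : (T \ S) ∪ (S ∩ T) = T := by
        ext v
        simp only [Finset.mem_union, Finset.mem_sdiff, Finset.mem_inter]
        constructor
        · rintro (⟨h1, _⟩ | ⟨_, h1⟩) <;> exact h1
        · intro hv
          by_cases hvS : v ∈ S
          · exact Or.inr ⟨hvS, hv⟩
          · exact Or.inl ⟨hv, hvS⟩
      have e2 : (T \ S) ∩ (S ∩ T) = ∅ := by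
        ext v; simp only [Finset.mem_inter, Finset.mem_sdiff, Finset.notMem_empty]
        simp; tauto
      rw [e1, e2] at hs
      have hge : (0:ℝ) ≤ G ∅ := hGnonneg ∅
      linarith
    have hInonneg : 0 ≤ G (S ∩ T) := hGnonneg (S ∩ T)
    have hchain : (1 - β) * G (T \ S) + β * ((1 - β) * g S) ≤ G (S ∪ T) := by
      have := hinner
      rw [hsum] at this
      rw [hsplit]
      nlinarith
    nlinarith [hGnonneg (T \ S)]
  -- cardinality bound
  have hcard : ((S \ T).card : ℝ) + ((T \ S).card : ℝ) ≤ (Fintype.card α : ℝ) := by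
    have hd : Disjoint (S \ T) (T \ S) := by
      rw [Finset.disjoint_left]
      intro v hv hv'
      exact (Finset.mem_sdiff.mp hv').2 (Finset.mem_sdiff.mp hv).1
    have h1 : (S \ T).card + (T \ S).card = ((S \ T) ∪ (T \ S)).card :=
      (Finset.card_union_of_disjoint hd).symm
    have h2 : ((S \ T) ∪ (T \ S)).card ≤ Fintype.card α := by
      rw [← Finset.card_univ]
      exact Finset.card_le_card (Finset.subset_univ _)
    have := h1 ▸ h2
    exact_mod_cast (h1 ▸ h2 : (S \ T).card + (T \ S).card ≤ Fintype.card α)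
  -- final arithmetic
  have h1β : (0:ℝ) < 1 + β := by linarith
  have main : β * (1 - β) * g S ≤
      (1 + β) * (G T + β * ℓ T - β * ℓ S + 3 * (Fintype.card α : ℝ) * Δ / 2) := by
    have hDfac : ((S \ T).card : ℝ) * (3 * Δ / 2) + ((T \ S).card : ℝ) * (3 * Δ / 2)
        ≤ (Fintype.card α : ℝ) * (3 * Δ / 2) := by
      have h3 : (0:ℝ) ≤ 3 * Δ / 2 := by linarith
      nlinarith
    nlinarith [P1, P2, P3, mul_nonneg (mul_nonneg (by norm_num : (0:ℝ) ≤ 3)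
      (Nat.cast_nonneg (Fintype.card α))) hΔ]
  rw [ge_iff_le, ← sub_nonneg]
  rw [div_mul_eq_mul_div, ← sub_nonneg] at *
  have goal2 : β * (1 - β) * g S / (1 + β) ≤ G T + β * ℓ T - β * ℓ S
      + 3 * (Fintype.card α : ℝ) * Δ / 2 := by
    rw [div_le_iff₀ h1β]
    nlinarith [main]
  simp only [hG] at goal2 ⊢
  linarith
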